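/- The φ-invariant decomposition V = W_φ ⊕ U_φ of a finite potent endomorphism φ (with W_φ finite-dimensional, φ|_{W_φ} an isomorphism, φ|_{U_φ} nilpotent) is unique, and Tate's trace tr_V(φ) equals the ordinary trace of φ|_{W_φ}. -/

import Mathlib

/-- An endomorphism is finite potent if some power has finite-dimensional range. -/
def IsFinitePotent {k V : Type*} [Field k] [AddCommGroup V] [Module k V]
    (φ : V →ₗ[k] V) : Prop :=
  ∃ n : ℕ, FiniteDimensional k (LinearMap.range (φ ^ n))

/-- `c` is a value of Tate's trace of `φ`: the ordinary trace of the restriction of `φ` to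
any finite-dimensional `φ`-invariant subspace `W` with `φⁿ V ⊆ W` for some `n` equals `c`. -/
def TateTraceSpec {k V : Type*} [Field k] [AddCommGroup V] [Module k V]
    (φ : V →ₗ[k] V) (c : k) : Prop :=
  ∀ (W : Submodule k V) (hW : ∀ x ∈ W, φ x ∈ W), FiniteDimensional k W →
    (∃ n : ℕ, LinearMap.range (φ ^ n) ≤ W) →
    LinearMap.trace k W (φ.restrict hW) = c

open Classical in
/-- Tate's trace of a finite potent endomorphism. -/
noncomputable def tateTrace {k V : Type*} [Field k] [AddCommGroup V] [Module k V]
    (φ : V →ₗ[k] V) : k :=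
  if h : ∃ c, TateTraceSpec φ c then h.choose else 0


section Aux
variable {k V : Type*} [Field k] [AddCommGroup V] [Module k V]

/-- Under the decomposition hypotheses, `range (φ^n) = W` and `ker (φ^n) = U` for `n ≥ m`. -/
lemma core_ker_range (φ : V →ₗ[k] V) (W U : Submodule k V) (hW : ∀ x ∈ W, φ x ∈ W)
    (hc : IsCompl W U) (hbij : Function.Bijective (φ.restrict hW))
    (m : ℕ) (hm : ∀ u ∈ U, (φ ^ m) u = 0) (n : ℕ) (hn : m ≤ n) :
    LinearMap.range (φ ^ n) = W ∧ LinearMap.ker (φ ^ n) = U := by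
  have hWn : ∀ x ∈ W, (φ ^ n) x ∈ W := fun x hx =>
    Module.End.pow_apply_mem_of_forall_mem n hW x hx
  have hUz : ∀ u ∈ U, (φ ^ n) u = 0 := by
    intro u hu
    have h1 : φ ^ n = φ ^ (n - m) * φ ^ m := by rw [← pow_add]; congr 1; omega
    rw [h1, Module.End.mul_apply, hm u hu, map_zero]
  have hdecomp : ∀ x : V, ∃ w ∈ W, ∃ u ∈ U, x = w + u := by
    intro x
    have hx : x ∈ W ⊔ U := by rw [hc.sup_eq_top]; trivial
    obtain ⟨w, hw, u, hu, h⟩ := Submodule.mem_sup.mp hx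
    exact ⟨w, hw, u, hu, h.symm⟩
  have hres : (φ.restrict hW) ^ n = (φ ^ n).restrict hWn := Module.End.pow_restrict n hW
  have hbijn : Function.Bijective ((φ ^ n).restrict hWn) := by
    rw [← hres, Module.End.coe_pow]
    exact hbij.iterate n
  constructor
  · apply le_antisymm
    · rintro _ ⟨x, rfl⟩
      obtain ⟨w, hw, u, hu, rfl⟩ := hdecomp x
      rw [map_add, hUz u hu, add_zero]
      exact hWn w hw
    · intro w hw
      obtain ⟨y, hy⟩ := hbijn.2 ⟨w, hw⟩
      exact ⟨y, by simpa using congrArg Subtype.val hy⟩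
  · apply le_antisymm
    · intro x hx
      obtain ⟨w, hw, u, hu, rfl⟩ := hdecomp x
      have h0 : (φ ^ n) w = 0 := by
        have := (LinearMap.mem_ker.mp hx)
        rwa [map_add, hUz u hu, add_zero] at this
      have : (⟨w, hw⟩ : W) = 0 := hbijn.1 (by ext; simpa using h0)
      have hw0 : w = 0 := congrArg Subtype.val this
      simpa [hw0] using hu
    · intro u hu
      exact LinearMap.mem_ker.mpr (hUz u hu)

lemma tate_spec (φ : V →ₗ[k] V) (W U : Submodule k V) (hW : ∀ x ∈ W, φ x ∈ W)
    (hc : IsCompl W U) (hfd : FiniteDimensional k W) (hU : ∀ x ∈ U, φ x ∈ U)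
    (hbij : Function.Bijective (φ.restrict hW))
    (m : ℕ) (hm : ∀ u ∈ U, (φ ^ m) u = 0) :
    TateTraceSpec φ (LinearMap.trace k W (φ.restrict hW)) := by
  intro W'' hW'' hfd'' ⟨n₀, hn₀⟩
  -- W ≤ W''
  have hle : W ≤ W'' := by
    have h1 := (core_ker_range φ W U hW hc hbij m hm (max m n₀) (le_max_left _ _)).1
    rw [← h1]
    rintro _ ⟨x, rfl⟩
    have h2 : φ ^ (max m n₀) = φ ^ n₀ * φ ^ (max m n₀ - n₀) := by
      rw [← pow_add]; congr 1; omega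
    rw [h2, Module.End.mul_apply]
    exact hn₀ ⟨_, rfl⟩
  -- the projection onto W along U
  set π : V →ₗ[k] V := W.subtype ∘ₗ (W.linearProjOfIsCompl U hc) with hπ
  have hπmem : ∀ x, π x ∈ W := fun x => (W.linearProjOfIsCompl U hc x).2
  have hπW : ∀ x ∈ W, π x = x := fun x hx => by
    simp [hπ, Submodule.linearProjOfIsCompl, Submodule.projectionOnto_apply_left hc ⟨x, hx⟩]
  have hπU : ∀ x ∈ U, π x = 0 := fun x hx => by
    simp [hπ, Submodule.linearProjOfIsCompl, Submodule.projectionOnto_apply_right hc ⟨x, hx⟩]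
  set q : V →ₗ[k] V := φ - π ∘ₗ φ with hq
  have hqU : ∀ x, q x ∈ U := by
    intro x
    have hx : x ∈ W ⊔ U := by rw [hc.sup_eq_top]; trivial
    obtain ⟨w, hw, u, hu, rfl⟩ := Submodule.mem_sup.mp hx
    have : q (w + u) = φ u - π (φ u) := by
      simp only [hq, LinearMap.sub_apply, LinearMap.comp_apply, map_add]
      rw [hπW _ (hW w hw)]
      abel
    rw [this, hπU _ (hU u hu), sub_zero]
    exact hU u hu
  have hqUφ : ∀ x ∈ U, q x = φ x := by
    intro x hx
    simp only [hq, LinearMap.sub_apply, LinearMap.comp_apply, hπU _ (hU x hx), sub_zero]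
  -- q^(m+1) = 0
  have hqpow : ∀ j, ∀ x ∈ U, (q ^ j) x = (φ ^ j) x ∧ (φ ^ j) x ∈ U := by
    intro j
    induction j with
    | zero => intro x hx; simpa using hx
    | succ j ih =>
      intro x hx
      obtain ⟨h1, h2⟩ := ih x hx
      constructor
      · rw [pow_succ', pow_succ', Module.End.mul_apply, Module.End.mul_apply, h1]
        exact hqUφ _ h2
      · rw [pow_succ', Module.End.mul_apply]
        exact hU _ h2
  have hqzero : q ^ (m + 1) = 0 := by
    ext x
    rw [pow_succ, Module.End.mul_apply]
    have := hqpow m (q x) (hqU x)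
    simp only [LinearMap.zero_apply, this.1]
    exact hm _ (hqU x)
  -- restrictions to W''
  have hg'' : ∀ x ∈ W'', (π ∘ₗ φ) x ∈ W'' := fun x _ => hle (hπmem (φ x))
  have hq'' : ∀ x ∈ W'', q x ∈ W'' := by
    intro x hx
    simp only [hq, LinearMap.sub_apply]
    exact Submodule.sub_mem _ (hW'' x hx) (hg'' x hx)
  have hsplit : φ.restrict hW'' = (π ∘ₗ φ).restrict hg'' + q.restrict hq'' := by
    ext x
    simp [hq, LinearMap.restrict_apply]
  -- trace of nilpotent part is zero
  have htrq : LinearMap.trace k W'' (q.restrict hq'') = 0 := by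
    have hnilres : IsNilpotent (q.restrict hq'') := by
      refine ⟨m + 1, ?_⟩
      rw [Module.End.pow_restrict]
      ext x
      simp [LinearMap.restrict_apply, hqzero]
    exact (LinearMap.isNilpotent_trace_of_isNilpotent hnilres).eq_zero
  -- trace of the projection part equals trace on W
  haveI : Module.Finite k W'' := hfd''
  have hgmem : ∀ x : W'', ((π ∘ₗ φ).restrict hg'') x ∈ W.comap W''.subtype := by
    intro x
    simp only [Submodule.mem_comap, Submodule.coe_subtype, LinearMap.restrict_coe_apply]
    exact hπmem _
  have htr1 : LinearMap.trace k (W.comap W''.subtype)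
      ((((π ∘ₗ φ).restrict hg'')).restrict (fun x _ => hgmem x))
      = LinearMap.trace k W'' ((π ∘ₗ φ).restrict hg'') :=
    LinearMap.trace_restrict_eq_of_forall_mem _ _ hgmem _
  set e := Submodule.comapSubtypeEquivOfLe hle
  have hconj : (((π ∘ₗ φ).restrict hg'')).restrict (fun x _ => hgmem x)
      = e.symm.conj (φ.restrict hW) := by
    have hcoe : ∀ y : W.comap W''.subtype, ((y : W'') : V) ∈ W := fun y => y.2
    have he : ∀ y : W, (((e.symm y : W.comap W''.subtype) : W'') : V) = (y : V) := by
      intro y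
      have h := Submodule.comapSubtypeEquivOfLe_apply_coe hle (e.symm y)
      rw [LinearEquiv.apply_symm_apply] at h
      exact h
    ext x
    simp only [LinearMap.restrict_coe_apply, LinearEquiv.conj_apply, LinearMap.comp_apply,
      LinearEquiv.coe_coe]
    rw [he, LinearMap.restrict_coe_apply, LinearEquiv.symm_symm]
    have hex : ((e x : W) : V) = ((x : W'') : V) :=
      Submodule.comapSubtypeEquivOfLe_apply_coe hle x
    rw [hex]
    exact hπW _ (hW _ (hcoe x))
  have htr2 : LinearMap.trace k W'' ((π ∘ₗ φ).restrict hg'')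
      = LinearMap.trace k W (φ.restrict hW) := by
    rw [← htr1, hconj, LinearMap.trace_conj']
  rw [hsplit, map_add, htrq, add_zero, htr2]

end Aux

theorem invariant_decomposition_unique_and_tateTrace
    {k V : Type*} [Field k] [AddCommGroup V] [Module k V]
    (φ : V →ₗ[k] V) (hφ : IsFinitePotent φ)
    (W U : Submodule k V) (hW : ∀ x ∈ W, φ x ∈ W)
    (hc : IsCompl W U) (hfd : FiniteDimensional k W) (hU : ∀ x ∈ U, φ x ∈ U)
    (hbij : Function.Bijective (φ.restrict hW)) (hnil : ∃ n : ℕ, ∀ u ∈ U, (φ ^ n) u = 0)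
    (W' U' : Submodule k V) (hW' : ∀ x ∈ W', φ x ∈ W')
    (hc' : IsCompl W' U') (hfd' : FiniteDimensional k W') (hU' : ∀ x ∈ U', φ x ∈ U')
    (hbij' : Function.Bijective (φ.restrict hW')) (hnil' : ∃ n : ℕ, ∀ u ∈ U', (φ ^ n) u = 0) :
    W = W' ∧ U = U' ∧ tateTrace φ = LinearMap.trace k W (φ.restrict hW) := by
  obtain ⟨m, hm⟩ := hnil
  obtain ⟨m', hm'⟩ := hnil'
  set N := max m m'
  obtain ⟨hr, hk⟩ := core_ker_range φ W U hW hc hbij m hm N (le_max_left _ _)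
  obtain ⟨hr', hk'⟩ := core_ker_range φ W' U' hW' hc' hbij' m' hm' N (le_max_right _ _)
  refine ⟨hr.symm.trans hr', hk.symm.trans hk', ?_⟩
  have hspec := tate_spec φ W U hW hc hfd hU hbij m hm
  have hex : ∃ c, TateTraceSpec φ c := ⟨_, hspec⟩
  have h1 : tateTrace φ = hex.choose := by
    rw [tateTrace, dif_pos hex]
  have h2 := hex.choose_spec W hW hfd ⟨m, (core_ker_range φ W U hW hc hbij m hm m le_rfl).1.le⟩
  rw [h1, ← h2]
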